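/- Let K be a field, G a finite group, S a nonempty subset of G, and f a nonzero element of the group algebra KG with support S. If there exists a sequence g_1,...,g_t in G such that for every i in {2,...,t}, the set S·g_i is not contained in the union of the sets S·g_j for j < i, then the K-dimension of the right ideal f·KG is at least t. -/

import Mathlib

open MonoidAlgebra

attribute [local instance] Classical.propDecidable

/-- Coefficientwise (Schur) product on the group algebra. -/
noncomputable def schur {K G : Type*} [Semiring K] (f g : MonoidAlgebra K G) :
    MonoidAlgebra K G :=
  MonoidAlgebra.ofCoeff (Finsupp.zipWith (· * ·) (mul_zero 0) f.coeff g.coeff)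

/-- `C` is a right ideal of the group algebra. -/
def IsRightIdeal {K G : Type*} [Field K] [Group G]
    (C : Submodule K (MonoidAlgebra K G)) : Prop :=
  ∀ c ∈ C, ∀ v : MonoidAlgebra K G, c * v ∈ C

/-- If a sequence `g 0, ..., g (t-1)` has right `S`-rank `t` where `S = supp f`,
then `dim (f·KG) ≥ t`. -/
theorem stmt0 {K G : Type*} [Field K] [Group G] [Fintype G]
    (f : MonoidAlgebra K G) (hf : f ≠ 0) (S : Finset G) (hS : f.coeff.support = S)
    (t : ℕ) (g : Fin t → G)
    (hseq : ∀ i : Fin t, 0 < (i : ℕ) →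
      ¬ ((fun s => s * g i) '' (S : Set G) ⊆
          ⋃ j ∈ Set.Iio i, (fun s => s * g j) '' (S : Set G))) :
    t ≤ Module.finrank K ↥(LinearMap.range (LinearMap.mulLeft K f)) := by
  classical
  set v : Fin t → MonoidAlgebra K G :=
    fun i => f * MonoidAlgebra.single (g i) (1 : K) with hv
  have hmem : ∀ i, v i ∈ LinearMap.range (LinearMap.mulLeft K f) := fun i =>
    ⟨MonoidAlgebra.single (g i) 1, rfl⟩
  have hli : LinearIndependent K v := by
    rw [Fintype.linearIndependent_iff]
    intro c hc
    by_contra hne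
    push_neg at hne
    obtain ⟨i, hi⟩ := hne
    set T : Finset (Fin t) := Finset.univ.filter (fun i => c i ≠ 0) with hT
    have hTne : T.Nonempty := ⟨i, by simp [hT, hi]⟩
    set i₀ := T.max' hTne with hi₀
    have hci₀ : c i₀ ≠ 0 := by have := T.max'_mem hTne; simpa [hT] using this
    have hmax : ∀ j, i₀ < j → c j = 0 := by
      intro j hj
      by_contra h
      exact absurd (T.le_max' j (by simp [hT, h])) (not_le.mpr hj)
    obtain ⟨s, hsS, hs⟩ : ∃ s ∈ S, ∀ j : Fin t, j < i₀ → s * g i₀ * (g j)⁻¹ ∉ S := by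
      rcases Nat.eq_zero_or_pos (i₀ : ℕ) with h0 | h0
      · obtain ⟨s, hsS⟩ : S.Nonempty := by
          rw [← hS]; exact Finsupp.support_nonempty_iff.mpr (MonoidAlgebra.coeff_eq_zero.not.mpr hf)
        refine ⟨s, hsS, fun j hj => absurd hj ?_⟩
        simp only [not_lt]
        exact le_of_le_of_eq (Fin.le_def.mpr (by omega)) rfl
      · have h1 := hseq i₀ h0
        rw [Set.not_subset] at h1
        obtain ⟨x, hx, hx2⟩ := h1
        obtain ⟨s, hsS, rfl⟩ := hx
        refine ⟨s, hsS, fun j hj hmemS => hx2 ?_⟩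
        simp only [Set.mem_iUnion, Set.mem_image]
        exact ⟨j, hj, ⟨s * g i₀ * (g j)⁻¹, hmemS, by group⟩⟩
    have heval : (∑ j : Fin t, c j • v j).coeff (s * g i₀) = 0 := by rw [hc]; rfl
    rw [MonoidAlgebra.coeff_sum, Finsupp.finset_sum_apply] at heval
    have hterm : ∀ j : Fin t, (c j • v j).coeff (s * g i₀) = c j * f.coeff (s * g i₀ * (g j)⁻¹) := by
      intro j
      rw [MonoidAlgebra.coeff_smul_apply, hv]
      simp [MonoidAlgebra.coeff_mul_single_apply, smul_eq_mul]
    have hsum : ∑ j : Fin t, (c j • v j).coeff (s * g i₀) = c i₀ * f.coeff s := by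
      rw [Finset.sum_eq_single i₀]
      · rw [hterm]
        congr 1
        simp [mul_assoc]
      · intro j _ hji
        rw [hterm]
        rcases lt_or_gt_of_ne hji with hlt | hgt
        · have : f.coeff (s * g i₀ * (g j)⁻¹) = 0 := by
            by_contra h
            exact hs j hlt (by rw [← hS]; exact Finsupp.mem_support_iff.mpr h)
          rw [this, mul_zero]
        · rw [hmax j hgt, zero_mul]
      · intro h; exact absurd (Finset.mem_univ i₀) h
    rw [hsum] at heval
    have hfs : f.coeff s ≠ 0 := Finsupp.mem_support_iff.mp (by rw [hS]; exact hsS)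
    exact (mul_ne_zero hci₀ hfs) heval
  haveI : Module.Finite K (MonoidAlgebra K G) :=
    Module.Finite.equiv (MonoidAlgebra.coeffLinearEquiv K).symm
  set w : Fin t → ↥(LinearMap.range (LinearMap.mulLeft K f)) :=
    fun i => ⟨v i, hmem i⟩ with hw
  have hliw : LinearIndependent K w := by
    apply LinearIndependent.of_comp (LinearMap.range (LinearMap.mulLeft K f)).subtype
    exact hli
  simpa using hliw.fintype_card_le_finrank
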